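/- arXiv:1512.06958 — 2 statements merged into one kernel-verified Lean document; each statement's English description precedes it below -/
import Mathlib

section
/- Let Δ be a flag weak 3-pseudomanifold on n vertices and let σ = {v_1, v_2, v_3, v_4} be a facet of Δ. Then f_0(lk_Δ v_1) + f_0(lk_Δ v_2) + f_0(lk_Δ v_3) + f_0(lk_Δ v_4) ≤ 2n + 8. -/
open Finset

/-- An abstract simplicial complex on vertex type `V`, given by a finite,
downward-closed family of finite faces containing the empty face. -/
structure SC (V : Type*) [DecidableEq V] where
  faces : Finset (Finset V)
  empty_mem : ∅ ∈ faces
  down_closed : ∀ ⦃σ τ : Finset V⦄, σ ∈ faces → τ ⊆ σ → τ ∈ faces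

namespace SC

variable {V : Type*} [DecidableEq V]

/-- The vertex set of a complex. -/
def vertexSet (Δ : SC V) : Finset V := Δ.faces.sup id

/-- `fNum Δ i` is the number of `i`-dimensional faces (faces of cardinality `i+1`). -/
def fNum (Δ : SC V) (i : ℕ) : ℕ := (Δ.faces.filter fun σ => σ.card = i + 1).card

/-- A complex is flag if it is the clique complex of its graph, i.e. every set of
vertices which is pairwise joined by edges is a face (equivalently, all minimal
non-faces have cardinality two). -/
def IsFlag (Δ : SC V) : Prop :=
  ∀ σ : Finset V, (∀ u ∈ σ, ∀ v ∈ σ, ({u, v} : Finset V) ∈ Δ.faces) → σ ∈ Δ.faces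

/-- The restriction `Δ[W]` of `Δ` to a set `W` of vertices. -/
def restrict (Δ : SC V) (W : Finset V) : SC V where
  faces := Δ.faces.filter fun σ => σ ⊆ W
  empty_mem := by simp [Δ.empty_mem]
  down_closed := by
    intro σ τ hσ hτ
    simp only [mem_filter] at hσ ⊢
    exact ⟨Δ.down_closed hσ.1 hτ, hτ.trans hσ.2⟩

/-- The link of a face `σ` in `Δ`. -/
def link (Δ : SC V) (σ : Finset V) : SC V where
  faces := insert ∅ (Δ.faces.filter fun τ => Disjoint τ σ ∧ τ ∪ σ ∈ Δ.faces)
  empty_mem := mem_insert_self _ _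
  down_closed := by
    intro τ ρ hτ hρ
    rcases mem_insert.1 hτ with h | h
    · subst h
      simp [Finset.subset_empty.1 hρ]
    · simp only [mem_filter] at h
      refine mem_insert.2 (Or.inr ?_)
      simp only [mem_filter]
      exact ⟨Δ.down_closed h.1 hρ, h.2.1.mono_left hρ,
        Δ.down_closed h.2.2 (Finset.union_subset_union hρ Finset.Subset.rfl)⟩

/-- A facet is a maximal face. -/
def IsFacet (Δ : SC V) (σ : Finset V) : Prop :=
  σ ∈ Δ.faces ∧ ∀ τ ∈ Δ.faces, σ ⊆ τ → σ = τ

/-- `Δ` is pure of dimension `D`: all faces have dimension at most `D` and all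
facets have dimension exactly `D`. -/
def Pure (Δ : SC V) (D : ℕ) : Prop :=
  (∀ σ ∈ Δ.faces, σ.card ≤ D + 1) ∧ (∃ σ ∈ Δ.faces, σ.card = D + 1) ∧
    ∀ σ : Finset V, Δ.IsFacet σ → σ.card = D + 1

/-- The graph (1-skeleton) of a complex. -/
def graph (Δ : SC V) : SimpleGraph V where
  Adj u v := u ≠ v ∧ ({u, v} : Finset V) ∈ Δ.faces
  symm := by
    constructor
    intro u v h
    exact ⟨h.1.symm, by rw [Finset.pair_comm]; exact h.2⟩
  loopless := by constructor; intro u h; exact h.1 rfl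

/-- A complex is connected if its vertex set is nonempty and any two vertices are
joined by a path in its graph. -/
def Connected (Δ : SC V) : Prop :=
  Δ.vertexSet.Nonempty ∧ ∀ u ∈ Δ.vertexSet, ∀ v ∈ Δ.vertexSet, Δ.graph.Reachable u v

/-- The reduced Euler characteristic `χ̃(Δ) = -1 + f₀ - f₁ + f₂ - ⋯`. -/
def redChar (Δ : SC V) : ℤ := -∑ σ ∈ Δ.faces, (-1 : ℤ) ^ σ.card

/-- `Δ` is an Eulerian complex of dimension `D`: it is pure of dimension `D` and the
reduced Euler characteristic of the link of every face `σ` (including `σ = ∅`)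
equals `(-1) ^ (dim lk σ)`, written multiplicatively to avoid signed dimensions. -/
def IsEulerian (Δ : SC V) (D : ℕ) : Prop :=
  Δ.Pure D ∧ ∀ σ ∈ Δ.faces, (Δ.link σ).redChar * (-1) ^ σ.card = (-1) ^ D

/-- A weak pseudomanifold of dimension `D`: pure and every ridge ((D-1)-face) lies
in exactly two facets. -/
def IsWeakPseudo (Δ : SC V) (D : ℕ) : Prop :=
  Δ.Pure D ∧ ∀ σ ∈ Δ.faces, σ.card = D →
    (Δ.faces.filter fun τ => σ ⊆ τ ∧ τ.card = D + 1).card = 2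

/-- A normal pseudomanifold of dimension `D`: a connected weak pseudomanifold all of
whose links of faces of dimension `≤ D - 2` are connected. -/
def IsNormalPseudo (Δ : SC V) (D : ℕ) : Prop :=
  Δ.IsWeakPseudo D ∧ Δ.Connected ∧
    ∀ σ ∈ Δ.faces, σ.card + 1 ≤ D → (Δ.link σ).Connected

/-- The join of two complexes (on disjoint vertex sets). -/
def join (Δ Γ : SC V) : SC V where
  faces := (Δ.faces ×ˢ Γ.faces).image fun p => p.1 ∪ p.2
  empty_mem := Finset.mem_image.2 ⟨(∅, ∅),
    Finset.mem_product.2 ⟨Δ.empty_mem, Γ.empty_mem⟩, Finset.union_empty ∅⟩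
  down_closed := by
    intro σ τ hσ hτ
    rw [Finset.mem_image] at hσ ⊢
    obtain ⟨⟨a, b⟩, hab, rfl⟩ := hσ
    rw [Finset.mem_product] at hab
    refine ⟨(τ ∩ a, τ ∩ b), Finset.mem_product.2
      ⟨Δ.down_closed hab.1 Finset.inter_subset_right,
       Γ.down_closed hab.2 Finset.inter_subset_right⟩, ?_⟩
    rw [← Finset.inter_union_distrib_left]
    exact Finset.inter_eq_left.2 hτ

/-- The trivial complex, whose only face is the empty face (identity for join). -/
def trivialSC : SC V where
  faces := {∅}
  empty_mem := Finset.mem_singleton_self ∅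
  down_closed := by
    intro σ τ hσ hτ
    simp only [Finset.mem_singleton] at hσ ⊢
    subst hσ
    exact Finset.subset_empty.1 hτ

/-- The join of a finite family of complexes. -/
def bigJoin : {k : ℕ} → (Fin k → SC V) → SC V
  | 0, _ => trivialSC
  | _ + 1, C => (C 0).join (bigJoin fun i => C i.succ)

/-- `Δ` is a cycle (circle) with `n` vertices: a connected, 1-dimensional complex
all of whose vertices have exactly two neighbours. -/
def IsCycle (Δ : SC V) (n : ℕ) : Prop :=
  Δ.vertexSet.card = n ∧ (∀ σ ∈ Δ.faces, σ.card ≤ 2) ∧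
    (∀ v ∈ Δ.vertexSet, (Δ.link {v}).vertexSet.card = 2) ∧ Δ.Connected

/-- `Δ` is the boundary complex of the `d`-dimensional cross-polytope: its vertices
come in `d` antipodal pairs and the faces are exactly the sets containing at most
one vertex of each pair. -/
def IsCrossPolytopeBoundary (Δ : SC V) (d : ℕ) : Prop :=
  ∃ x y : Fin d → V, Function.Injective x ∧ Function.Injective y ∧
    (∀ i j, x i ≠ y j) ∧
    ∀ σ : Finset V, σ ∈ Δ.faces ↔
      ((∀ v ∈ σ, ∃ i, v = x i ∨ v = y i) ∧ ∀ i, ¬(x i ∈ σ ∧ y i ∈ σ))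

/-- `Δ` is a simplicial 2-sphere: a connected weak 2-pseudomanifold whose vertex
links are circles and whose reduced Euler characteristic is 1. -/
def IsSphere2 (Δ : SC V) : Prop :=
  Δ.Connected ∧ Δ.IsWeakPseudo 2 ∧
    (∀ v ∈ Δ.vertexSet, ∃ n, 3 ≤ n ∧ (Δ.link {v}).IsCycle n) ∧ Δ.redChar = 1

/-- `Δ` is a (closed) simplicial 3-manifold: connected, pure of dimension 3, and the
link of every vertex is a simplicial 2-sphere. -/
def Is3Manifold (Δ : SC V) : Prop :=
  Δ.Connected ∧ Δ.Pure 3 ∧ ∀ v ∈ Δ.vertexSet, (Δ.link {v}).IsSphere2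

/-- `Δ` is a disjoint union of cycles, each of length at least 4: it is
1-dimensional, 2-regular and its graph has no triangles. -/
def IsDisjointUnionOfCyclesGe4 (Δ : SC V) : Prop :=
  (∀ σ ∈ Δ.faces, σ.card ≤ 2) ∧
    (∀ v ∈ Δ.vertexSet, (Δ.link {v}).vertexSet.card = 2) ∧
    ∀ u v w : V, ({u, v} : Finset V) ∈ Δ.faces → ({v, w} : Finset V) ∈ Δ.faces →
      ({u, w} : Finset V) ∈ Δ.faces → u = v ∨ v = w ∨ u = w

end SC

namespace SC

variable {V : Type*} [DecidableEq V]

lemma mem_vertexSet_iff (Δ : SC V) (u : V) :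
    u ∈ Δ.vertexSet ↔ ∃ τ ∈ Δ.faces, u ∈ τ := by
  simp [vertexSet, Finset.mem_sup]

lemma mem_vertexSet_of_mem {Δ : SC V} {τ : Finset V} (hτ : τ ∈ Δ.faces) {u : V}
    (hu : u ∈ τ) : u ∈ Δ.vertexSet := (mem_vertexSet_iff Δ u).2 ⟨τ, hτ, hu⟩

lemma link_vertexSet_eq (Δ : SC V) (v : V) :
    (Δ.link {v}).vertexSet
      = Δ.vertexSet.filter (fun u => u ≠ v ∧ ({u, v} : Finset V) ∈ Δ.faces) := by
  ext u
  simp only [mem_vertexSet_iff, Finset.mem_filter, link, Finset.mem_insert,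
    Finset.mem_filter]
  constructor
  · rintro ⟨τ, (rfl | ⟨hτ, hd, hu⟩), hmem⟩
    · simp at hmem
    · have hne : u ≠ v := by
        intro h
        exact Finset.disjoint_left.1 hd hmem (by simp [h])
      have hsub : ({u, v} : Finset V) ⊆ τ ∪ {v} := by
        intro x hx
        rcases Finset.mem_insert.1 hx with rfl | hx
        · exact Finset.mem_union_left _ hmem
        · exact Finset.mem_union_right _ hx
      exact ⟨⟨τ, hτ, hmem⟩, hne, Δ.down_closed hu hsub⟩
  · rintro ⟨⟨τ, hτ, hmem⟩, hne, hedge⟩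
    refine ⟨{u}, Or.inr ⟨Δ.down_closed hedge (by simp), ?_, ?_⟩, by simp⟩
    · simp [Finset.disjoint_singleton, Ne.symm hne]; exact hne
    · have : ({u} : Finset V) ∪ {v} = {u, v} := by
        ext x; simp [Finset.mem_union]
      rw [this]; exact hedge

end SC

/-- In a flag weak 3-pseudomanifold on `n` vertices, for any facet `σ`
the sum of the degrees of the four vertices of `σ` is at most `2n + 8`. -/
theorem statement_7 {V : Type*} [DecidableEq V] (Δ : SC V) (n : ℕ)
    (hflag : Δ.IsFlag) (hpseudo : Δ.IsWeakPseudo 3) (hn : Δ.vertexSet.card = n)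
    (σ : Finset V) (hσ : Δ.IsFacet σ) (hcard : σ.card = 4) :
    ∑ v ∈ σ, (Δ.link {v}).vertexSet.card ≤ 2 * n + 8 := by
  classical
  obtain ⟨hσf, hσmax⟩ := hσ
  obtain ⟨hpure, hridge⟩ := hpseudo
  set vs := Δ.vertexSet with hvs
  -- σ is contained in the vertex set
  have hσvs : σ ⊆ vs := fun v hv => SC.mem_vertexSet_of_mem hσf hv
  have hn4 : 4 ≤ n := by
    rw [← hn, ← hcard]; exact Finset.card_le_card hσvs
  -- adjacency counting function
  set d : V → ℕ := fun u =>
    (σ.filter (fun v => u ≠ v ∧ ({u, v} : Finset V) ∈ Δ.faces)).card with hd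
  -- a vertex adjacent to something is in vs
  have hmemvs : ∀ u v : V, ({u, v} : Finset V) ∈ Δ.faces → u ∈ vs := by
    intro u v h
    exact SC.mem_vertexSet_of_mem h (by simp)
  -- σ is nonempty
  have hσne : σ.Nonempty := Finset.card_pos.1 (by omega)
  -- if u is adjacent to all of a subset T of σ with u ∉ σ, then insert u T is a face
  have hins : ∀ (u : V) (T : Finset V), T ⊆ σ →
      (∀ v ∈ T, u ≠ v ∧ ({u, v} : Finset V) ∈ Δ.faces) → T.Nonempty →
      insert u T ∈ Δ.faces := by
    intro u T hTσ hadj hTne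
    apply hflag
    intro a ha b hb
    by_cases hau : a = u
    · by_cases hbu : b = u
      · obtain ⟨v0, hv0⟩ := hTne
        have hu1 : ({u} : Finset V) ∈ Δ.faces :=
          Δ.down_closed (hadj v0 hv0).2 (by simp)
        rw [hau, hbu]
        simpa using hu1
      · have hbT : b ∈ T := by
          rcases Finset.mem_insert.1 hb with h | h
          · exact absurd h hbu
          · exact h
        rw [hau]
        exact (hadj b hbT).2
    · have haT : a ∈ T := by
        rcases Finset.mem_insert.1 ha with h | h
        · exact absurd h hau
        · exact h
      by_cases hbu : b = u
      · rw [hbu, Finset.pair_comm]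
        exact (hadj a haT).2
      · have hbT : b ∈ T := by
          rcases Finset.mem_insert.1 hb with h | h
          · exact absurd h hbu
          · exact h
        exact Δ.down_closed hσf (Finset.insert_subset (hTσ haT)
          (Finset.singleton_subset_iff.2 (hTσ hbT)))
  -- every vertex has d u ≤ 3
  have hd3 : ∀ u : V, d u ≤ 3 := by
    intro u
    by_cases huσ : u ∈ σ
    · have hsub : σ.filter (fun v => u ≠ v ∧ ({u, v} : Finset V) ∈ Δ.faces)
          ⊆ σ.erase u := by
        intro v hv
        simp only [Finset.mem_filter] at hv
        exact Finset.mem_erase.2 ⟨fun h => hv.2.1 h.symm, hv.1⟩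
      calc d u ≤ (σ.erase u).card := Finset.card_le_card hsub
        _ = 3 := by rw [Finset.card_erase_of_mem huσ, hcard]
    · by_contra hgt
      push_neg at hgt
      have hle : d u ≤ 4 := by
        rw [hd]
        calc (σ.filter _).card ≤ σ.card := Finset.card_le_card (Finset.filter_subset _ _)
          _ = 4 := hcard
      have heq4 : d u = 4 := by omega
      have hfeq : σ.filter (fun v => u ≠ v ∧ ({u, v} : Finset V) ∈ Δ.faces) = σ :=
        Finset.eq_of_subset_of_card_le (Finset.filter_subset _ _) (by rw [hcard, ← heq4]; )
      have hall : ∀ v ∈ σ, u ≠ v ∧ ({u, v} : Finset V) ∈ Δ.faces := by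
        intro v hv
        have : v ∈ σ.filter (fun v => u ≠ v ∧ ({u, v} : Finset V) ∈ Δ.faces) := by
          rw [hfeq]; exact hv
        exact (Finset.mem_filter.1 this).2
      have hface : insert u σ ∈ Δ.faces := hins u σ Finset.Subset.rfl hall hσne
      have := hσmax _ hface (Finset.subset_insert _ _)
      exact huσ (this ▸ Finset.mem_insert_self u σ)
  -- the triple map: for u ∉ σ with d u = 3
  set T : V → Finset V := fun u =>
    σ.filter (fun v => u ≠ v ∧ ({u, v} : Finset V) ∈ Δ.faces) with hT
  -- facts about u ∉ σ with d u = 3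
  have hTface : ∀ u, u ∉ σ → d u = 3 → insert u (T u) ∈ Δ.faces := by
    intro u hu h3
    refine hins u (T u) (Finset.filter_subset _ _) ?_ ?_
    · intro v hv; exact (Finset.mem_filter.1 hv).2
    · rw [← Finset.card_pos]
      have : (T u).card = 3 := h3
      omega
  have hTcard : ∀ u, u ∉ σ → d u = 3 → (insert u (T u)).card = 4 := by
    intro u hu h3
    have huT : u ∉ T u := fun h => hu (Finset.filter_subset _ _ h)
    rw [Finset.card_insert_of_notMem huT]
    have : (T u).card = 3 := h3
    omega
  -- injectivity of T on {u ∉ σ : d u = 3}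
  have hinj : ∀ u u', u ∈ vs \ σ → u' ∈ vs \ σ → d u = 3 → d u' = 3 →
      T u = T u' → u = u' := by
    intro u u' hu hu' h3 h3' hTeq
    by_contra hne
    have huσ : u ∉ σ := (Finset.mem_sdiff.1 hu).2
    have hu'σ : u' ∉ σ := (Finset.mem_sdiff.1 hu').2
    have hTσ : T u ⊆ σ := Finset.filter_subset _ _
    have hTf : T u ∈ Δ.faces := Δ.down_closed hσf hTσ
    have hTc : (T u).card = 3 := h3
    have hcount := hridge (T u) hTf hTc
    -- the three facets σ, insert u (T u), insert u' (T u)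
    set F := Δ.faces.filter (fun τ => T u ⊆ τ ∧ τ.card = 3 + 1) with hF
    have hσF : σ ∈ F := Finset.mem_filter.2 ⟨hσf, hTσ, by omega⟩
    have huF : insert u (T u) ∈ F :=
      Finset.mem_filter.2 ⟨hTface u huσ h3, Finset.subset_insert _ _, by
        have := hTcard u huσ h3; omega⟩
    have hu'F : insert u' (T u) ∈ F := by
      refine Finset.mem_filter.2 ⟨?_, ?_, ?_⟩
      · rw [hTeq]; exact hTface u' hu'σ h3'
      · rw [hTeq]; exact Finset.subset_insert _ _
      · rw [hTeq]; have := hTcard u' hu'σ h3'; omega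
    have h1 : insert u (T u) ≠ σ := by
      intro h
      exact huσ (h ▸ Finset.mem_insert_self u (T u))
    have h2 : insert u' (T u) ≠ σ := by
      intro h
      exact hu'σ (h ▸ Finset.mem_insert_self u' (T u))
    have h12 : insert u (T u) ≠ insert u' (T u) := by
      intro h
      have : u ∈ insert u' (T u) := h ▸ Finset.mem_insert_self u (T u)
      rcases Finset.mem_insert.1 this with rfl | hmem
      · exact hne rfl
      · exact huσ (hTσ hmem)
    have hsub3 : ({σ, insert u (T u), insert u' (T u)} : Finset (Finset V)) ⊆ F := by
      intro x hx
      rcases Finset.mem_insert.1 hx with rfl | hx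
      · exact hσF
      rcases Finset.mem_insert.1 hx with rfl | hx
      · exact huF
      · rw [Finset.mem_singleton.1 hx]; exact hu'F
    have hcard3 : ({σ, insert u (T u), insert u' (T u)} : Finset (Finset V)).card = 3 := by
      rw [Finset.card_insert_of_notMem, Finset.card_insert_of_notMem,
        Finset.card_singleton]
      · simp [h12]
      · simp [Ne.symm h1, Ne.symm h2]
    have := Finset.card_le_card hsub3
    rw [hcard3, hcount] at this
    omega
  -- main double counting
  have hsum : ∑ v ∈ σ, (Δ.link {v}).vertexSet.card = ∑ u ∈ vs, d u := by
    have : ∀ v ∈ σ, (Δ.link {v}).vertexSet.card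
        = ∑ u ∈ vs, if u ≠ v ∧ ({u, v} : Finset V) ∈ Δ.faces then 1 else 0 := by
      intro v hv
      rw [SC.link_vertexSet_eq, ← hvs, Finset.card_filter]
    rw [Finset.sum_congr rfl this, Finset.sum_comm]
    refine Finset.sum_congr rfl fun u hu => ?_
    simp only [hd, Finset.card_filter]
  rw [hsum]
  -- split the sum
  have hsplit : ∑ u ∈ vs, d u = ∑ u ∈ vs \ σ, d u + ∑ u ∈ σ, d u :=
    (Finset.sum_sdiff hσvs).symm
  rw [hsplit]
  -- bound the sum over σ
  have hbσ : ∑ u ∈ σ, d u ≤ 12 := by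
    calc ∑ u ∈ σ, d u ≤ ∑ _u ∈ σ, 3 := Finset.sum_le_sum fun u _ => hd3 u
      _ = 12 := by rw [Finset.sum_const, hcard]; rfl
  -- bound the sum over vs \ σ
  have hS : ((vs \ σ).filter (fun u => d u = 3)).card ≤ 4 := by
    have hmaps : ∀ u ∈ (vs \ σ).filter (fun u => d u = 3),
        T u ∈ σ.powersetCard 3 := by
      intro u hu
      obtain ⟨hu1, hu2⟩ := Finset.mem_filter.1 hu
      exact Finset.mem_powersetCard.2 ⟨Finset.filter_subset _ _, hu2⟩
    have hinj' : ∀ u ∈ (vs \ σ).filter (fun u => d u = 3),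
        ∀ u' ∈ (vs \ σ).filter (fun u => d u = 3), T u = T u' → u = u' := by
      intro u hu u' hu' h
      obtain ⟨hu1, hu2⟩ := Finset.mem_filter.1 hu
      obtain ⟨hu'1, hu'2⟩ := Finset.mem_filter.1 hu'
      exact hinj u u' hu1 hu'1 hu2 hu'2 h
    calc ((vs \ σ).filter (fun u => d u = 3)).card
        ≤ (σ.powersetCard 3).card := Finset.card_le_card_of_injOn T hmaps hinj'
      _ = 4 := by rw [Finset.card_powersetCard, hcard]; rfl
  have hbout : ∑ u ∈ vs \ σ, d u ≤ 2 * (n - 4) + 4 := by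
    have hcards : (vs \ σ).card = n - 4 := by
      rw [Finset.card_sdiff_of_subset hσvs, hn, hcard]
    calc ∑ u ∈ vs \ σ, d u
        ≤ ∑ u ∈ vs \ σ, (2 + if d u = 3 then 1 else 0) := by
          refine Finset.sum_le_sum fun u _ => ?_
          have := hd3 u
          by_cases h : d u = 3
          · simp [h]
          · simp [h]; omega
      _ = 2 * (vs \ σ).card + ((vs \ σ).filter (fun u => d u = 3)).card := by
          rw [Finset.sum_add_distrib, Finset.sum_const, ← Finset.card_filter]
          ring_nf
      _ ≤ 2 * (n - 4) + 4 := by rw [hcards]; omega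
  omega
end

section
/- Let Δ be a flag (d-1)-dimensional simplicial complex and let σ = τ_1 ∪ τ_2 be a facet of Δ where τ_1 is an i-face and τ_2 is a (d-i-2)-face. If V(lk_Δ τ_1) ∪ V(lk_Δ τ_2) = V(Δ), then Δ is a subcomplex of the join lk_Δ τ_1 * lk_Δ τ_2. -/
open Finset

lemma link_vertex_aux {V : Type*} [DecidableEq V] {Δ : SC V} {τ : Finset V} {v : V}
    (h : v ∈ (Δ.link τ).vertexSet) : v ∉ τ ∧ {v} ∪ τ ∈ Δ.faces := by
  obtain ⟨γ, hγ, hv⟩ := Finset.mem_sup.1 h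
  have h1 : ({v} : Finset V) ∈ (Δ.link τ).faces :=
    (Δ.link τ).down_closed hγ (by simpa using hv)
  rcases Finset.mem_insert.1 h1 with h | h
  · simp at h
  · simp only [Finset.mem_filter] at h
    exact ⟨fun hv' => (Finset.disjoint_left.1 h.2.1) (Finset.mem_singleton_self v) hv',
      h.2.2⟩

lemma key_aux {V : Type*} [DecidableEq V] {Δ : SC V} (hflag : Δ.IsFlag)
    {τ ρ ρ' : Finset V} (hρ : ρ ∈ Δ.faces) (hτ : τ ∈ Δ.faces)
    (hsub : ρ' ⊆ ρ) (hlk : ρ' ⊆ (Δ.link τ).vertexSet) : ρ' ∈ (Δ.link τ).faces := by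
  have hdisj : Disjoint ρ' τ := Finset.disjoint_left.2 fun v hv =>
    (link_vertex_aux (hlk hv)).1
  have hunion : ρ' ∪ τ ∈ Δ.faces := by
    apply hflag
    intro u hu v hv
    rcases Finset.mem_union.1 hu with hu | hu <;> rcases Finset.mem_union.1 hv with hv | hv
    · exact Δ.down_closed hρ (Finset.insert_subset (hsub hu)
        (Finset.singleton_subset_iff.2 (hsub hv)))
    · exact Δ.down_closed (link_vertex_aux (hlk hu)).2 (Finset.insert_subset
        (Finset.mem_union_left _ (Finset.mem_singleton_self u))
        (Finset.singleton_subset_iff.2 (Finset.mem_union_right _ hv)))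
    · exact Δ.down_closed (link_vertex_aux (hlk hv)).2 (Finset.insert_subset
        (Finset.mem_union_right _ hu)
        (Finset.singleton_subset_iff.2 (Finset.mem_union_left _ (Finset.mem_singleton_self v))))
    · exact Δ.down_closed hτ (Finset.insert_subset hu (Finset.singleton_subset_iff.2 hv))
  exact Finset.mem_insert.2 (Or.inr (Finset.mem_filter.2
    ⟨Δ.down_closed hρ hsub, hdisj, hunion⟩))

/-- In a flag `(d-1)`-dimensional complex with a facet `σ = τ₁ ∪ τ₂`
where `τ₁` is an `i`-face and `τ₂` a `(d-i-2)`-face, if the vertex sets of the links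
of `τ₁` and `τ₂` cover all of `V(Δ)`, then `Δ ⊆ lk τ₁ * lk τ₂`. -/
theorem statement_13 {V : Type*} [DecidableEq V] (Δ : SC V) (d i : ℕ)
    (hi : i + 2 ≤ d) (hflag : Δ.IsFlag) (hdim : ∀ τ ∈ Δ.faces, τ.card ≤ d)
    (τ₁ τ₂ : Finset V) (hdisj : Disjoint τ₁ τ₂) (hfacet : Δ.IsFacet (τ₁ ∪ τ₂))
    (hc1 : τ₁.card = i + 1) (hc2 : τ₂.card = d - i - 1)
    (hcover : (Δ.link τ₁).vertexSet ∪ (Δ.link τ₂).vertexSet = Δ.vertexSet) :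
    Δ.faces ⊆ ((Δ.link τ₁).join (Δ.link τ₂)).faces := by
  intro ρ hρ
  have hτ₁ : τ₁ ∈ Δ.faces := Δ.down_closed hfacet.1 Finset.subset_union_left
  have hτ₂ : τ₂ ∈ Δ.faces := Δ.down_closed hfacet.1 Finset.subset_union_right
  set ρ₁ := ρ ∩ (Δ.link τ₁).vertexSet with hρ₁def
  set ρ₂ := ρ \ (Δ.link τ₁).vertexSet with hρ₂def
  have hρsub : ρ ⊆ Δ.vertexSet := fun v hv => Finset.mem_sup.2 ⟨ρ, hρ, hv⟩
  have h1 : ρ₁ ∈ (Δ.link τ₁).faces :=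
    key_aux hflag hρ hτ₁ Finset.inter_subset_left Finset.inter_subset_right
  have h2 : ρ₂ ∈ (Δ.link τ₂).faces := by
    refine key_aux hflag hρ hτ₂ (Finset.sdiff_subset) ?_
    intro v hv
    have := hρsub (Finset.mem_sdiff.1 hv).1
    rw [← hcover] at this
    rcases Finset.mem_union.1 this with h | h
    · exact absurd h (Finset.mem_sdiff.1 hv).2
    · exact h
  refine Finset.mem_image.2 ⟨(ρ₁, ρ₂), Finset.mem_product.2 ⟨h1, h2⟩, ?_⟩
  simp only
  ext v; simp only [hρ₁def, hρ₂def, Finset.mem_union, Finset.mem_inter, Finset.mem_sdiff]; tauto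
end
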